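/- arXiv:1002.2586 — 7 statements merged into one kernel-verified Lean document; each statement's English description precedes it below -/
import Mathlib

section
/- Let n < m and let P be a fixed m×m real orthogonal matrix. If A is a random n×m real matrix whose entries are independent standard Gaussian random variables (i.e., A is distributed according to the product of standard Gaussian measures on the space of n×m real matrices), then with probability 1 the spark of AP equals n+1. -/
open MeasureTheory ProbabilityTheory Matrix

lemma measurable_mvpoly_eval {σ : Type*} (p : MvPolynomial σ ℝ) :
    Measurable fun x : σ → ℝ => MvPolynomial.eval x p := by
  classical
  have h : (fun x : σ → ℝ => MvPolynomial.eval x p)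
      = fun x => ∑ d ∈ p.support, MvPolynomial.coeff d p * ∏ i ∈ d.support, x i ^ d i := by
    funext x; rw [MvPolynomial.eval_eq]
  rw [h]
  exact Finset.measurable_sum _ fun d _ =>
    (Finset.measurable_prod _ fun i _ => (measurable_pi_apply i).pow_const _).const_mul _

lemma gaussian_pi_eval_ne_zero_fin :
    ∀ (N : ℕ) (p : MvPolynomial (Fin N) ℝ), p ≠ 0 →
      (Measure.pi fun _ : Fin N => gaussianReal 0 1)
        {x | MvPolynomial.eval x p = 0} = 0 := by
  intro N
  induction N with
  | zero =>
      intro p hp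
      obtain ⟨c, rfl⟩ := MvPolynomial.C_surjective (Fin 0) p
      have hc : c ≠ 0 := by simpa using hp
      have h : {x : Fin 0 → ℝ | MvPolynomial.eval x (MvPolynomial.C c) = 0} = ∅ := by
        ext x; simp [hc]
      rw [h]; exact measure_empty
  | succ N ih =>
      intro p hp
      set ν : Measure ℝ := gaussianReal 0 1 with hν
      haveI : NullSingletonClass ν := ⟨fun x =>
        ProbabilityTheory.gaussianReal_absolutelyContinuous 0 one_ne_zero
          (measure_singleton x)⟩
      set q := MvPolynomial.finSuccEquiv ℝ N p with hqdef
      have hq0 : q ≠ 0 := by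
        simp only [hqdef, ne_eq, EmbeddingLike.map_eq_zero_iff]
        exact hp
      have hlc : q.leadingCoeff ≠ 0 := Polynomial.leadingCoeff_ne_zero.mpr hq0
      have hmp := measurePreserving_piFinSuccAbove (fun _ : Fin (N + 1) => ν) 0
      set e := MeasurableEquiv.piFinSuccAbove (fun _ : Fin (N + 1) => ℝ) 0 with he
      set μN : Measure (Fin N → ℝ) := Measure.pi fun _ => ν with hμN
      have hcons : Measurable fun z : ℝ × (Fin N → ℝ) => (Fin.cons z.1 z.2 : Fin (N+1) → ℝ) := by
        refine measurable_pi_iff.mpr fun i => ?_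
        induction i using Fin.cases with
        | zero => simpa using measurable_fst
        | succ j =>
          have h : Measurable fun z : ℝ × (Fin N → ℝ) => z.2 j := (measurable_pi_apply j).comp measurable_snd
          simpa using h
      set T : Set (ℝ × (Fin N → ℝ)) :=
        {z | MvPolynomial.eval (Fin.cons z.1 z.2 : Fin (N+1) → ℝ) p = 0} with hT
      have hTm : MeasurableSet T :=
        ((measurable_mvpoly_eval p).comp hcons) (measurableSet_singleton 0)
      have hef : ∀ f : Fin (N+1) → ℝ, (Fin.cons (e f).1 (e f).2 : Fin (N+1) → ℝ) = f := by
        intro f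
        ext i
        induction i using Fin.cases with
        | zero => simp [he, MeasurableEquiv.piFinSuccAbove]
        | succ j => simp [he, MeasurableEquiv.piFinSuccAbove, Fin.tail]
      have hpre : {x : Fin (N+1) → ℝ | MvPolynomial.eval x p = 0} = ⇑e ⁻¹' T := by
        ext f
        simp only [Set.mem_setOf_eq, Set.mem_preimage, hT]
        rw [hef f]
      rw [hpre, hmp.measure_preimage hTm.nullMeasurableSet]
      have hswap : (ν.prod μN) T = (μN.prod ν) (Prod.swap ⁻¹' T) := by
        rw [← Measure.prod_swap, Measure.map_apply measurable_swap hTm]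
      rw [hswap, Measure.measure_prod_null (hTm.preimage measurable_swap)]
      have hae : ∀ᵐ x ∂μN, MvPolynomial.eval x q.leadingCoeff ≠ 0 := by
        rw [ae_iff]
        simpa using ih _ hlc
      filter_upwards [hae] with x hx
      have hmap : (q.map (MvPolynomial.eval x)) ≠ 0 := by
        intro h
        have : (q.map (MvPolynomial.eval x)).coeff q.natDegree
            = MvPolynomial.eval x q.leadingCoeff := by
          rw [Polynomial.coeff_map]; rfl
        rw [h] at this
        simp at this
        exact hx this.symm
      have hsec : (Prod.mk x ⁻¹' (Prod.swap ⁻¹' T))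
          = {y : ℝ | (q.map (MvPolynomial.eval x)).IsRoot y} := by
        ext y
        simp only [Set.mem_preimage, Set.mem_setOf_eq, hT, Prod.swap_prod_mk,
          Polynomial.IsRoot]
        rw [MvPolynomial.eval_eq_eval_mv_eval' x y p, hqdef]
      rw [hsec]
      exact (Polynomial.finite_setOf_isRoot hmap).measure_zero ν

lemma gaussian_pi_eval_ne_zero {ι : Type*} [Fintype ι] (p : MvPolynomial ι ℝ) (hp : p ≠ 0) :
    (Measure.pi fun _ : ι => gaussianReal 0 1) {x | MvPolynomial.eval x p = 0} = 0 := by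
  classical
  set e : Fin (Fintype.card ι) ≃ ι := (Fintype.equivFin ι).symm with he
  have hmp := measurePreserving_piCongrLeft (fun _ : ι => gaussianReal 0 1) e
  have hS : MeasurableSet {x : ι → ℝ | MvPolynomial.eval x p = 0} :=
    (measurable_mvpoly_eval p) (measurableSet_singleton 0)
  rw [← hmp.measure_preimage hS.nullMeasurableSet] at *
  have hpre : (⇑(MeasurableEquiv.piCongrLeft (fun _ : ι => ℝ) e)) ⁻¹'
        {x : ι → ℝ | MvPolynomial.eval x p = 0}
      = {x : Fin (Fintype.card ι) → ℝ |
          MvPolynomial.eval x (MvPolynomial.rename e.symm p) = 0} := by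
    ext x
    simp only [Set.mem_preimage, Set.mem_setOf_eq, MvPolynomial.eval_rename]
    have hfe : (⇑(MeasurableEquiv.piCongrLeft (fun _ : ι => ℝ) e) x) = x ∘ e.symm := by
      funext i
      obtain ⟨j, rfl⟩ := e.surjective i
      simp [MeasurableEquiv.piCongrLeft]
    rw [hfe]
  rw [hpre]
  have hp' : MvPolynomial.rename e.symm p ≠ 0 := by
    intro h
    refine hp ?_
    have h2 := congrArg (MvPolynomial.rename ⇑e) h
    simpa [MvPolynomial.rename_rename, Equiv.self_comp_symm] using h2
  exact gaussian_pi_eval_ne_zero_fin _ _ hp'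

open Classical in
/-- The spark of a matrix: the smallest number of columns that form a linearly
dependent set; with the convention that it is the number of columns plus one if
all sets of columns are linearly independent. -/
noncomputable def Matrix.spark {α β : Type*} [Fintype α] [Fintype β] (D : Matrix α β ℝ) : ℕ :=
  if ∃ s : Finset β, ¬ LinearIndependent ℝ (fun j : s => fun i => D i j.val) then
    sInf {k | ∃ s : Finset β, s.card = k ∧ ¬ LinearIndependent ℝ (fun j : s => fun i => D i j.val)}
  else Fintype.card β + 1

/-- If `A` is a random `n × m` matrix (`n < m`) with i.i.d. standard Gaussian entries
and `P` is a fixed `m × m` orthogonal matrix, then with probability 1 the spark of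
`A * P` equals `n + 1`. -/
theorem spark_AP_eq_ae {n m : ℕ} (hnm : n < m)
    (P : Matrix (Fin m) (Fin m) ℝ) (hP : Pᵀ * P = 1) :
    ∀ᵐ (ω : Fin n × Fin m → ℝ) ∂(Measure.pi fun _ : Fin n × Fin m => gaussianReal 0 1),
      ((Matrix.of fun i j => ω (i, j)) * P).spark = n + 1 := by
  classical
  have key : ∀ s : Finset (Fin m),
      ∀ᵐ (ω : Fin n × Fin m → ℝ) ∂(Measure.pi fun _ : Fin n × Fin m => gaussianReal 0 1),
      s.card = n →
      LinearIndependent ℝ (fun j : s => fun i =>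
        ((Matrix.of fun i j => ω (i, j)) * P) i j.val) := by
    intro s
    by_cases hs : s.card = n
    · set es := s.orderIsoOfFin hs with hes
      set p : MvPolynomial (Fin n × Fin m) ℝ :=
        Matrix.det (Matrix.of fun i j : Fin n =>
          ∑ k : Fin m, MvPolynomial.X (i, k) * MvPolynomial.C (P k (es j : Fin m))) with hpdef
      have heval : ∀ ω : Fin n × Fin m → ℝ, MvPolynomial.eval ω p
          = Matrix.det (Matrix.of fun i j : Fin n =>
              ∑ k : Fin m, ω (i, k) * P k (es j : Fin m)) := by
        intro ω
        rw [hpdef, RingHom.map_det]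
        congr 1
        ext i j
        simp [Matrix.map_apply, map_sum]
      have hp0 : p ≠ 0 := by
        intro h
        have h1 : MvPolynomial.eval (fun ik : Fin n × Fin m => P ik.2 (es ik.1 : Fin m)) p = 1 := by
          rw [heval]
          have hentry : (Matrix.of fun i j : Fin n =>
              ∑ k : Fin m, P k (es i : Fin m) * P k (es j : Fin m))
              = (1 : Matrix (Fin n) (Fin n) ℝ) := by
            ext i j
            have h2 : ∑ k : Fin m, P k (es i : Fin m) * P k (es j : Fin m)
                = (Pᵀ * P) (es i : Fin m) (es j : Fin m) := by
              simp [Matrix.mul_apply, Matrix.transpose_apply]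
            rw [Matrix.of_apply, h2, hP]
            by_cases hij : i = j
            · subst hij; simp
            · have : (es i : Fin m) ≠ (es j : Fin m) := by
                intro hcon
                exact hij (es.injective (Subtype.coe_injective hcon))
              rw [Matrix.one_apply_ne this, Matrix.one_apply_ne hij]
          rw [hentry, Matrix.det_one]
        rw [h] at h1
        simp at h1
      have hnull := gaussian_pi_eval_ne_zero p hp0
      have hae : ∀ᵐ (ω : Fin n × Fin m → ℝ)
          ∂(Measure.pi fun _ : Fin n × Fin m => gaussianReal 0 1),
          MvPolynomial.eval ω p ≠ 0 := by
        rw [ae_iff]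
        simpa using hnull
      filter_upwards [hae] with ω hω _
      set D := (Matrix.of fun i j => ω (i, j)) * P with hD
      set A : Matrix (Fin n) (Fin n) ℝ := Matrix.of fun i j : Fin n => D i (es j : Fin m) with hA
      have hdet : A.det ≠ 0 := by
        rw [heval] at hω
        have hM : (Matrix.of fun i j : Fin n =>
            ∑ k : Fin m, ω (i, k) * P k (es j : Fin m)) = A := by
          ext i j
          simp [hA, hD, Matrix.mul_apply]
        rwa [hM] at hω
      have hcols : LinearIndependent ℝ fun j : Fin n => Aᵀ j :=
        Matrix.linearIndependent_cols_iff_isUnit.mpr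
          ((Matrix.isUnit_iff_isUnit_det _).mpr (isUnit_iff_ne_zero.mpr hdet))
      refine (linearIndependent_equiv' es.toEquiv.symm (f := fun j : Fin n => Aᵀ j)
        (g := fun j : s => fun i => D i j.val) ?_).mpr hcols
      funext j
      funext i
      simp [hA, Matrix.transpose_apply, OrderIso.apply_symm_apply]
    · exact Filter.Eventually.of_forall fun ω h => absurd h hs
  have H := (ae_all_iff).mpr key
  filter_upwards [H] with ω hω
  set D := (Matrix.of fun i j => ω (i, j)) * P with hD
  obtain ⟨t, -, ht⟩ := Finset.exists_subset_card_eq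
    (show n + 1 ≤ (Finset.univ : Finset (Fin m)).card by simpa using hnm)
  have hdept : ¬ LinearIndependent ℝ (fun j : t => fun i => D i j.val) := by
    intro h
    have hcard := h.fintype_card_le_finrank
    rw [Fintype.card_coe, ht, Module.finrank_fin_fun] at hcard
    omega
  have hLIle : ∀ s : Finset (Fin m), s.card ≤ n →
      LinearIndependent ℝ (fun j : s => fun i => D i j.val) := by
    intro s hsle
    obtain ⟨t', hst', -, ht'⟩ := Finset.exists_subsuperset_card_eq s.subset_univ hsle
      (by simpa using hnm.le)
    exact (hω t' ht').comp (fun j : s => (⟨j.val, hst' j.2⟩ : t'))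
      (fun a b hab => Subtype.ext (by simpa using congrArg Subtype.val hab))
  rw [Matrix.spark, if_pos ⟨t, hdept⟩]
  refine le_antisymm (Nat.sInf_le ⟨t, ht, hdept⟩) (le_csInf ⟨n + 1, t, ht, hdept⟩ ?_)
  rintro k ⟨s, rfl, hdep⟩
  by_contra hk
  push_neg at hk
  exact hdep (hLIle s (by omega))
end

section
/- Let Ψ be a finite set of invertible m×m real matrices and let A ∈ ℝ^{n×m} satisfy: (i) σ(AP) ≥ 2k for every P ∈ Ψ, and (ii) A is k-rank preserving of Ψ. Suppose x = P s and x̄ = P̄ s̄ where P, P̄ ∈ Ψ, s and s̄ are vectors in ℝ^m with at most k nonzero entries each, and A x = A x̄. Then x = x̄. (That is, the solution to the blind compressed sensing problem with a finite set of bases is unique.) -/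
open Matrix

/-- The number of nonzero entries of a vector. -/
noncomputable def sparsity {m : Type*} [Fintype m] (s : m → ℝ) : ℕ :=
  (Finset.univ.filter fun i => s i ≠ 0).card

/-- The `m × (k + k)` matrix `[P_T, P̄_J]` formed by horizontally concatenating the
columns of `P` indexed by `T` and the columns of `P'` indexed by `J`. -/
def pairSubmatrix {m : ℕ} (P P' : Matrix (Fin m) (Fin m) ℝ) (T J : Finset (Fin m)) :
    Matrix (Fin m) (↥T ⊕ ↥J) ℝ :=
  Matrix.of fun i => Sum.elim (fun a => P i a.val) (fun a => P' i a.val)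

/-- `A` is `k`-rank preserving of the set of bases `Ψ` if for every two index sets
`T, J` of size `k` and every two matrices `P, P̄ ∈ Ψ`,
`rank (A * [P_T, P̄_J]) = rank [P_T, P̄_J]`. -/
def IsRankPreserving {n m : ℕ} (k : ℕ) (A : Matrix (Fin n) (Fin m) ℝ)
    (Ψ : Set (Matrix (Fin m) (Fin m) ℝ)) : Prop :=
  ∀ P ∈ Ψ, ∀ P' ∈ Ψ, ∀ T J : Finset (Fin m), T.card = k → J.card = k →
    (A * pairSubmatrix P P' T J).rank = (pairSubmatrix P P' T J).rank

lemma spark_le_card_add_one {α β : Type*} [Fintype α] [Fintype β] (D : Matrix α β ℝ) :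
    D.spark ≤ Fintype.card β + 1 := by
  classical
  unfold Matrix.spark
  split_ifs with h
  · obtain ⟨t, ht⟩ := h
    exact le_trans (Nat.sInf_le ⟨t, rfl, ht⟩) (by have := t.card_le_univ; omega)
  · exact le_refl _

/-- Uniqueness for blind compressed sensing with a finite set of bases: if
`σ(AP) ≥ 2k` for every `P ∈ Ψ` and `A` is `k`-rank preserving of `Ψ`, then two
signals that are `k`-sparse under bases from `Ψ` and have equal measurements must
be equal. -/
theorem finite_set_BCS_uniqueness {n m k : ℕ}
    (Ψ : Set (Matrix (Fin m) (Fin m) ℝ)) (hΨfin : Ψ.Finite)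
    (hΨinv : ∀ P ∈ Ψ, IsUnit P)
    (A : Matrix (Fin n) (Fin m) ℝ)
    (hspark : ∀ P ∈ Ψ, 2 * k ≤ (A * P).spark)
    (hrank : IsRankPreserving k A Ψ)
    (P Pbar : Matrix (Fin m) (Fin m) ℝ) (hP : P ∈ Ψ) (hPbar : Pbar ∈ Ψ)
    (s sbar : Fin m → ℝ) (hs : sparsity s ≤ k) (hsbar : sparsity sbar ≤ k)
    (x xbar : Fin m → ℝ) (hx : x = P.mulVec s) (hxbar : xbar = Pbar.mulVec sbar)
    (hmeas : A.mulVec x = A.mulVec xbar) :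
    x = xbar := by
  classical
  rcases Nat.eq_zero_or_pos m with hm | hm
  · subst hm; funext i; exact i.elim0
  have hk : k ≤ m := by
    have h1 := hspark P hP
    have h2 := spark_le_card_add_one (A * P)
    simp only [Fintype.card_fin] at h2
    omega
  unfold sparsity at hs hsbar
  obtain ⟨T, hST, hTcard⟩ := Finset.exists_superset_card_eq hs (by simpa using hk)
  obtain ⟨J, hSJ, hJcard⟩ := Finset.exists_superset_card_eq hsbar (by simpa using hk)
  set M := pairSubmatrix P Pbar T J with hM
  have hrk : (A * M).rank = M.rank := hrank P hP Pbar hPbar T J hTcard hJcard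
  -- kernels agree
  have hker : LinearMap.ker (A * M).mulVecLin = LinearMap.ker M.mulVecLin := by
    have hle : LinearMap.ker M.mulVecLin ≤ LinearMap.ker (A * M).mulVecLin := by
      intro v hv
      simp only [LinearMap.mem_ker, Matrix.mulVecLin_mul, LinearMap.comp_apply] at *
      rw [hv]; simp
    refine (Submodule.eq_of_le_of_finrank_le hle ?_).symm
    have h1 := LinearMap.finrank_range_add_finrank_ker M.mulVecLin
    have h2 := LinearMap.finrank_range_add_finrank_ker (A * M).mulVecLin
    rw [Matrix.rank, Matrix.rank] at hrk
    omega
  -- the test vector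
  set v : (↥T ⊕ ↥J) → ℝ := Sum.elim (fun a => s a.val) (fun a => -sbar a.val) with hv
  have hMv : M.mulVec v = x - xbar := by
    funext i
    have hxT : x i = ∑ a ∈ T, P i a * s a := by
      rw [hx]
      simp only [Matrix.mulVec, dotProduct]
      refine (Finset.sum_subset T.subset_univ fun j _ hj => ?_).symm
      have hz : s j = 0 := by
        by_contra hjs; exact hj (hST (Finset.mem_filter.2 ⟨Finset.mem_univ _, hjs⟩))
      rw [hz, mul_zero]
    have hxJ : xbar i = ∑ a ∈ J, Pbar i a * sbar a := by
      rw [hxbar]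
      simp only [Matrix.mulVec, dotProduct]
      refine (Finset.sum_subset J.subset_univ fun j _ hj => ?_).symm
      have hz : sbar j = 0 := by
        by_contra hjs; exact hj (hSJ (Finset.mem_filter.2 ⟨Finset.mem_univ _, hjs⟩))
      rw [hz, mul_zero]
    simp only [Matrix.mulVec, dotProduct, hM, pairSubmatrix, Matrix.of_apply, hv,
      Fintype.sum_sum_type, Sum.elim_inl, Sum.elim_inr, Pi.sub_apply]
    rw [hxT, hxJ, ← Finset.sum_attach T (fun a => P i a * s a),
      ← Finset.sum_attach J (fun a => Pbar i a * sbar a)]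
    simp [mul_neg, sub_eq_add_neg, Finset.sum_neg_distrib]
  have h0 : v ∈ LinearMap.ker (A * M).mulVecLin := by
    simp only [LinearMap.mem_ker, Matrix.mulVecLin_apply, ← Matrix.mulVec_mulVec, hMv]
    rw [Matrix.mulVec_sub, hmeas, sub_self]
  rw [hker] at h0
  have h1 : M.mulVec v = 0 := h0
  rw [hMv] at h1
  exact sub_eq_zero.mp h1
end

section
/- Let n be even and let A ∈ ℝ^{n×nL} be a union of L orthogonal bases which is not inter-block diagonal. Let P ∈ ℝ^{nL×nL} be orthogonal 2L-block diagonal with σ(AP) = n+1, and let Q be an nL×nL signed permutation matrix. If P̃ is any nL×nL matrix of the form P̃ = P′Q′, where P′ is orthogonal 2L-block diagonal and Q′ is a signed permutation matrix, and A P̃ = A P Q, then P̃ = P Q. (Uniqueness of the solution to the structurally constrained blind compressed sensing problem.) -/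
open Matrix

/-- The `n × nL` matrix `A = [A₁, …, A_L]` obtained by horizontally concatenating
the `n × n` blocks `Ab l` (here `n = 2r` and the columns of each block are indexed
by `Fin 2 × Fin r`). -/
def unionOfBases {r L : ℕ} (Ab : Fin L → Matrix (Fin (2 * r)) (Fin 2 × Fin r) ℝ) :
    Matrix (Fin (2 * r)) (Fin L × Fin 2 × Fin r) ℝ :=
  Matrix.of fun i p => Ab p.1 i p.2

/-- The `nL × nL` block diagonal matrix (with `n = 2r`, hence `2L` diagonal blocks of
size `r × r`) built from the blocks `Pb`. -/
def blockDiagonal2L {r L : ℕ} (Pb : Fin L × Fin 2 → Matrix (Fin r) (Fin r) ℝ) :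
    Matrix (Fin L × Fin 2 × Fin r) (Fin L × Fin 2 × Fin r) ℝ :=
  Matrix.of fun p q =>
    if (p.1, p.2.1) = (q.1, q.2.1) then Pb (p.1, p.2.1) p.2.2 q.2.2 else 0

/-- A signed permutation matrix: exactly one nonzero entry, equal to `±1`, in each
row and each column. -/
def IsSignedPermMatrix {ι : Type*} [Fintype ι] (Q : Matrix ι ι ℝ) : Prop :=
  (∀ i j, Q i j = 0 ∨ Q i j = 1 ∨ Q i j = -1) ∧
  (∀ i, ∃! j, Q i j ≠ 0) ∧ (∀ j, ∃! i, Q i j ≠ 0)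

/-- The `(c, d)` sub-block of size `r × r` of a `2r × 2r` matrix indexed by
`Fin 2 × Fin r`. -/
def subBlock {r : ℕ} (M : Matrix (Fin 2 × Fin r) (Fin 2 × Fin r) ℝ) (c d : Fin 2) :
    Matrix (Fin r) (Fin r) ℝ :=
  M.submatrix (fun a => (c, a)) (fun b => (d, b))

/-- A union of `L` orthogonal bases `A = [A₁, …, A_L]` is inter-block diagonal if
there are indices `i ≠ j` such that, writing `Aᵢᵀ Aⱼ = [[R₁, R₂], [R₃, R₄]]` with
blocks of size `(n/2) × (n/2)`, one has `rank R₁ = rank R₄` and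
`rank R₂ = rank R₃ = n/2 − rank R₁`. -/
def IsInterBlockDiagonal {r L : ℕ}
    (Ab : Fin L → Matrix (Fin (2 * r)) (Fin 2 × Fin r) ℝ) : Prop :=
  ∃ i j : Fin L, i ≠ j ∧
    (subBlock ((Ab i)ᵀ * Ab j) 0 0).rank = (subBlock ((Ab i)ᵀ * Ab j) 1 1).rank ∧
    (subBlock ((Ab i)ᵀ * Ab j) 0 1).rank = r - (subBlock ((Ab i)ᵀ * Ab j) 0 0).rank ∧
    (subBlock ((Ab i)ᵀ * Ab j) 1 0).rank = r - (subBlock ((Ab i)ᵀ * Ab j) 0 0).rank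

lemma BCS_signed_perm_form {ι : Type*} [Fintype ι] [DecidableEq ι] {Q : Matrix ι ι ℝ}
    (hQ : IsSignedPermMatrix Q) :
    ∃ (e : ι ≃ ι) (ε : ι → ℝ), (∀ j, ε j * ε j = 1) ∧ ∀ i j, Q i j = if i = e j then ε j else 0 := by
  obtain ⟨hval, hrow, hcol⟩ := hQ
  choose e0 he0 hu using hcol
  have hinj : Function.Injective e0 := by
    intro j j' h
    obtain ⟨k, hk, huk⟩ := hrow (e0 j)
    have h1 : j = k := huk j (he0 j)
    have h2 : j' = k := huk j' (h ▸ he0 j')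
    rw [h1, h2]
  obtain ⟨e, he⟩ : ∃ e : ι ≃ ι, ∀ j, e j = e0 j :=
    ⟨Equiv.ofBijective e0 ((Finite.injective_iff_bijective).1 hinj), fun j => rfl⟩
  refine ⟨e, fun j => Q (e0 j) j, fun j => ?_, fun i j => ?_⟩
  · rcases hval (e0 j) j with h | h | h
    · exact absurd h (he0 j)
    · simp only [h]; norm_num
    · simp only [h]; norm_num
  · rw [he]
    by_cases h : i = e0 j
    · simp [h]
    · rw [if_neg h]
      by_contra hne
      exact h (hu j i hne)

lemma BCS_form_mul_transpose {ι : Type*} [Fintype ι] [DecidableEq ι] {Q : Matrix ι ι ℝ}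
    {e : ι ≃ ι} {ε : ι → ℝ} (hε : ∀ j, ε j * ε j = 1)
    (hform : ∀ i j, Q i j = if i = e j then ε j else 0) :
    Q * Qᵀ = 1 := by
  ext i j
  rw [Matrix.mul_apply]
  have key : ∀ k, Q i k * Qᵀ k j = if k = e.symm i then (if i = j then 1 else 0) else 0 := by
    intro k
    rw [Matrix.transpose_apply, hform, hform]
    by_cases hk : k = e.symm i
    · subst hk
      rw [if_pos (e.apply_symm_apply i).symm]
      by_cases hij : i = j
      · subst hij
        rw [if_pos (e.apply_symm_apply i).symm, if_pos rfl, if_pos rfl, hε]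
      · rw [if_neg (fun h => hij ((h.trans (e.apply_symm_apply i)).symm)), if_neg hij, mul_zero,
          ite_self]
    · rw [if_neg (fun h => hk (e.eq_symm_apply.2 h.symm)), if_neg hk, zero_mul]
  simp only [key]
  rw [Finset.sum_ite_eq' Finset.univ (e.symm i), if_pos (Finset.mem_univ _), Matrix.one_apply]

lemma BCS_form_transpose {ι : Type*} [Fintype ι] [DecidableEq ι] {Q : Matrix ι ι ℝ}
    {e : ι ≃ ι} {ε : ι → ℝ}
    (hform : ∀ i j, Q i j = if i = e j then ε j else 0) :
    ∀ i j, Qᵀ i j = if i = e.symm j then ε (e.symm j) else 0 := by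
  intro i j
  rw [Matrix.transpose_apply, hform]
  by_cases h : i = e.symm j
  · rw [if_pos (by rw [h, e.apply_symm_apply]), if_pos h, h]
  · rw [if_neg (fun hh : j = e i => h (by rw [hh, e.symm_apply_apply])), if_neg h]

lemma BCS_form_mul {ι : Type*} [Fintype ι] [DecidableEq ι] {Q R : Matrix ι ι ℝ}
    {e : ι ≃ ι} {g : ι → ι} {ε δ : ι → ℝ}
    (hQf : ∀ i j, Q i j = if i = e j then ε j else 0)
    (hRf : ∀ i j, R i j = if i = g j then δ j else 0) :
    ∀ i j, (Q * R) i j = if i = e (g j) then ε (g j) * δ j else 0 := by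
  intro i j
  rw [Matrix.mul_apply]
  have key : ∀ k, Q i k * R k j =
      if k = g j then (if i = e (g j) then ε (g j) * δ j else 0) else 0 := by
    intro k
    rw [hQf, hRf]
    by_cases hk : k = g j
    · subst hk; rw [if_pos rfl, if_pos rfl, ite_mul, zero_mul]
    · rw [if_neg hk, if_neg hk, mul_zero]
  simp only [key]
  rw [Finset.sum_ite_eq' Finset.univ (g j), if_pos (Finset.mem_univ _)]

lemma BCS_mul_form_apply {α ι : Type*} [Fintype ι] [DecidableEq ι] (X : Matrix α ι ℝ)
    {S : Matrix ι ι ℝ} {f : ι → ι} {s : ι → ℝ}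
    (hS : ∀ k j, S k j = if k = f j then s j else 0) (i : α) (j : ι) :
    (X * S) i j = X i (f j) * s j := by
  rw [Matrix.mul_apply]
  have key : ∀ k, X i k * S k j = if k = f j then X i (f j) * s j else 0 := by
    intro k
    rw [hS]
    by_cases hk : k = f j
    · subst hk; rw [if_pos rfl, if_pos rfl]
    · rw [if_neg hk, if_neg hk, mul_zero]
  simp only [key]
  rw [Finset.sum_ite_eq' Finset.univ (f j), if_pos (Finset.mem_univ _)]

lemma BCS_spark_linearIndependent {α β : Type*} [Fintype α] [Fintype β] {D : Matrix α β ℝ} {k : ℕ}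
    (h : D.spark = k) (s : Finset β) (hs : s.card < k) :
    LinearIndependent ℝ (fun j : s => fun i => D i j.val) := by
  by_contra hdep
  have hex : ∃ t : Finset β, ¬ LinearIndependent ℝ (fun j : t => fun i => D i j.val) := ⟨s, hdep⟩
  unfold Matrix.spark at h
  rw [if_pos hex] at h
  have hle : sInf {k | ∃ t : Finset β, t.card = k ∧
      ¬ LinearIndependent ℝ (fun j : t => fun i => D i j.val)} ≤ s.card :=
    Nat.sInf_le ⟨s, rfl, hdep⟩
  omega

lemma BCS_mul_blockDiag_apply {r L : ℕ} {α : Type*} [Fintype α]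
    (X : Matrix α (Fin L × Fin 2 × Fin r) ℝ)
    (Pb : Fin L × Fin 2 → Matrix (Fin r) (Fin r) ℝ) (i : α) (q : Fin L × Fin 2 × Fin r) :
    (X * blockDiagonal2L Pb) i q = ∑ a, X i (q.1, q.2.1, a) * Pb (q.1, q.2.1) a q.2.2 := by
  rw [Matrix.mul_apply, Fintype.sum_prod_type]
  simp only [Fintype.sum_prod_type, blockDiagonal2L, Matrix.of_apply, Prod.mk.injEq, ite_and,
    mul_ite, mul_zero, Finset.sum_ite_irrel, Finset.sum_const_zero, Finset.sum_ite_eq',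
    Finset.sum_ite_eq, Finset.mem_univ, if_true]

/-- Uniqueness of the solution to the structurally constrained BCS problem: if `A`
is a union of `L` orthogonal bases which is not inter-block diagonal, `P` is
orthogonal `2L`-block diagonal with `σ(AP) = n + 1`, `Q` is a signed permutation
matrix, and `P̃ = P′ Q′` (with `P′` orthogonal `2L`-block diagonal and `Q′` a
signed permutation matrix) satisfies `A P̃ = A P Q`, then `P̃ = P Q`. -/
theorem structural_BCS_uniqueness {r L : ℕ}
    (Ab : Fin L → Matrix (Fin (2 * r)) (Fin 2 × Fin r) ℝ)
    (hA : ∀ l, (Ab l)ᵀ * Ab l = 1)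
    (hnibd : ¬ IsInterBlockDiagonal Ab)
    (Pb : Fin L × Fin 2 → Matrix (Fin r) (Fin r) ℝ)
    (hP : ∀ b, (Pb b)ᵀ * Pb b = 1)
    (hspark : (unionOfBases Ab * blockDiagonal2L Pb).spark = 2 * r + 1)
    (Q : Matrix (Fin L × Fin 2 × Fin r) (Fin L × Fin 2 × Fin r) ℝ)
    (hQ : IsSignedPermMatrix Q)
    (Ptilde : Matrix (Fin L × Fin 2 × Fin r) (Fin L × Fin 2 × Fin r) ℝ)
    (P'b : Fin L × Fin 2 → Matrix (Fin r) (Fin r) ℝ)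
    (hP' : ∀ b, (P'b b)ᵀ * P'b b = 1)
    (Q' : Matrix (Fin L × Fin 2 × Fin r) (Fin L × Fin 2 × Fin r) ℝ)
    (hQ' : IsSignedPermMatrix Q')
    (hPtilde : Ptilde = blockDiagonal2L P'b * Q')
    (heq : unionOfBases Ab * Ptilde = unionOfBases Ab * blockDiagonal2L Pb * Q) :
    Ptilde = blockDiagonal2L Pb * Q := by
  rcases Nat.eq_zero_or_pos r with hr0 | hr
  · subst hr0
    ext p q
    exact p.2.2.elim0
  obtain ⟨e, ε, hε, hQf⟩ := BCS_signed_perm_form hQ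
  obtain ⟨e', ε', hε', hQ'f⟩ := BCS_signed_perm_form hQ'
  set A := unionOfBases Ab with hA_def
  set P := blockDiagonal2L Pb with hP_def
  set P' := blockDiagonal2L P'b with hP'_def
  have hQ'Q'T : Q' * Q'ᵀ = 1 := BCS_form_mul_transpose hε' hQ'f
  have hQ'TQ' : Q'ᵀ * Q' = 1 := mul_eq_one_comm.mp hQ'Q'T
  set S := Q * Q'ᵀ with hS_def
  set f : Fin L × Fin 2 × Fin r → Fin L × Fin 2 × Fin r := fun j => e (e'.symm j) with hf_def
  set s : Fin L × Fin 2 × Fin r → ℝ := fun j => ε (e'.symm j) * ε' (e'.symm j) with hs_def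
  have hSf : ∀ k j, S k j = if k = f j then s j else 0 := by
    intro k j
    simp only [hS_def, hf_def, hs_def]
    exact BCS_form_mul hQf (BCS_form_transpose hQ'f) k j
  have hss : ∀ j, s j * s j = 1 := by
    intro j
    have h1 := hε (e'.symm j)
    have h2 := hε' (e'.symm j)
    calc s j * s j
        = (ε (e'.symm j) * ε (e'.symm j)) * (ε' (e'.symm j) * ε' (e'.symm j)) := by
          simp only [hs_def]; ring
      _ = 1 := by rw [h1, h2, mul_one]
  have hAPS : A * P' = A * P * S := by
    have key : A * (P' * Q') = A * P * Q := by rw [← hPtilde]; exact heq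
    calc A * P' = A * P' * (Q' * Q'ᵀ) := by rw [hQ'Q'T, Matrix.mul_one]
      _ = A * (P' * Q') * Q'ᵀ := by simp only [Matrix.mul_assoc]
      _ = A * P * Q * Q'ᵀ := by rw [key]
      _ = A * P * S := by rw [Matrix.mul_assoc (A * P) Q Q'ᵀ, ← hS_def]
  have hcol : ∀ i j, (A * P') i j = (A * P) i (f j) * s j := by
    intro i j
    rw [hAPS]
    exact BCS_mul_form_apply (A * P) hSf i j
  have hcol2 : ∀ i j, (A * P) i (f j) = s j * (A * P') i j := by
    intro i j
    rw [hcol i j]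
    calc (A * P) i (f j) = (A * P) i (f j) * (s j * s j) := by rw [hss j, mul_one]
      _ = s j * ((A * P) i (f j) * s j) := by ring
  have hLI : ∀ t : Finset (Fin L × Fin 2 × Fin r), t.card ≤ 2 * r →
      LinearIndependent ℝ (fun j : t => fun i => (A * P) i j.val) := by
    intro t ht
    exact BCS_spark_linearIndependent hspark t (by omega)
  have hAe : ∀ (i) (l : Fin L) (c : Fin 2) (a : Fin r), A i (l, c, a) = Ab l i (c, a) :=
    fun _ _ _ _ => rfl
  have hAcols : ∀ (l : Fin L) (c : Fin 2) (a a' : Fin r),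
      ∑ i, A i (l, c, a) * A i (l, c, a') = if a = a' then 1 else 0 := by
    intro l c a a'
    have h1 := congrFun (congrFun (hA l) (c, a)) (c, a')
    rw [Matrix.mul_apply] at h1
    simp only [Matrix.transpose_apply, Matrix.one_apply, Prod.mk.injEq, true_and] at h1
    simp only [hAe]
    exact h1
  have hPbb : ∀ bb, Pb bb * (Pb bb)ᵀ = 1 := fun bb => mul_eq_one_comm.mp (hP bb)
  have hblock : ∀ j0 : Fin L × Fin 2 × Fin r, ((f j0).1, (f j0).2.1) = (j0.1, j0.2.1) := by
    rintro ⟨l, c, b⟩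
    by_contra hne
    set N := Pb (l, c) with hN
    set C : Matrix (Fin (2 * r)) (Fin r) ℝ := Matrix.of fun i a => A i (l, c, a) with hC
    set v : Fin r → ℝ := fun a => P'b (l, c) a b with hv
    set w : Fin r → ℝ := s (l, c, b) • (Nᵀ *ᵥ v) with hw
    have hCN : ∀ i a, (C * N) i a = (A * P) i (l, c, a) := by
      intro i a
      rw [hP_def, BCS_mul_blockDiag_apply, Matrix.mul_apply]
      rfl
    have hCv : ∀ i, (C *ᵥ v) i = (A * P') i (l, c, b) := by
      intro i
      rw [hP'_def, BCS_mul_blockDiag_apply]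
      rfl
    have hmat : (C * N) *ᵥ w = s (l, c, b) • (C *ᵥ v) := by
      rw [hw, Matrix.mulVec_smul, Matrix.mulVec_mulVec, Matrix.mul_assoc, hN, hPbb (l, c),
        Matrix.mul_one]
    have hkey : ∀ i, (A * P) i (f (l, c, b)) = ∑ a, w a * (A * P) i (l, c, a) := by
      intro i
      calc (A * P) i (f (l, c, b)) = s (l, c, b) * (A * P') i (l, c, b) := hcol2 i (l, c, b)
        _ = s (l, c, b) * (C *ᵥ v) i := by rw [hCv i]
        _ = (s (l, c, b) • (C *ᵥ v)) i := rfl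
        _ = ((C * N) *ᵥ w) i := by rw [hmat]
        _ = ∑ a, (C * N) i a * w a := rfl
        _ = ∑ a, w a * (A * P) i (l, c, a) := by
            refine Finset.sum_congr rfl fun a _ => ?_
            rw [hCN i a, mul_comm]
    set T : Finset (Fin L × Fin 2 × Fin r) :=
      Finset.image (fun a : Fin r => (l, c, a)) Finset.univ with hT
    have hmemT : ∀ m, m ∈ T ↔ ∃ a, ((l, c, a) : Fin L × Fin 2 × Fin r) = m := by
      intro m; simp [hT]
    have hfT : f (l, c, b) ∉ T := by
      intro hmem
      rw [hmemT] at hmem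
      obtain ⟨a, ha⟩ := hmem
      exact hne (by rw [← ha])
    have hTcard : T.card = r := by
      rw [hT, Finset.card_image_of_injective _ (fun a a' h => by simpa using h),
        Finset.card_univ, Fintype.card_fin]
    set t := insert (f (l, c, b)) T with ht
    have htcard : t.card = r + 1 := by rw [ht, Finset.card_insert_of_notMem hfT, hTcard]
    have hli := hLI t (by omega)
    rw [Fintype.linearIndependent_iff] at hli
    set g : (Fin L × Fin 2 × Fin r) → ℝ :=
      fun m => if m = f (l, c, b) then -1 else
        if (m.1, m.2.1) = (l, c) then w m.2.2 else 0 with hg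
    have hzero : ∑ j : t, (g j.val) • (fun i => (A * P) i j.val) = 0 := by
      rw [Finset.sum_coe_sort t (fun m => g m • (fun i => (A * P) i m)), ht,
        Finset.sum_insert hfT]
      have hTsum : ∑ m ∈ T, g m • (fun i => (A * P) i m)
          = ∑ a : Fin r, w a • (fun i => (A * P) i (l, c, a)) := by
        rw [hT, Finset.sum_image (fun a _ a' _ h => by simpa using h)]
        refine Finset.sum_congr rfl fun a _ => ?_
        have h1 : ((l, c, a) : Fin L × Fin 2 × Fin r) ≠ f (l, c, b) := by
          intro h
          exact hne (by rw [← h])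
        simp only [hg, if_neg h1, if_true]
      rw [hTsum]
      have hgf : g (f (l, c, b)) = -1 := by simp only [hg, if_pos rfl]
      rw [hgf]
      funext i
      simp only [Pi.add_apply, Finset.sum_apply, Pi.smul_apply, smul_eq_mul, Pi.zero_apply,
        neg_smul, one_smul, Pi.neg_apply]
      rw [hkey i]
      ring
    have hfin := hli (fun j => g j.val) hzero ⟨f (l, c, b), Finset.mem_insert_self _ _⟩
    simp only [hg, if_pos rfl] at hfin
    norm_num at hfin
  have hP'PS : P' = P * S := by
    ext ⟨l₂, c₂, a₂⟩ ⟨l, c, b⟩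
    have hbp : ((f (l, c, b)).1, (f (l, c, b)).2.1) = (l, c) := hblock (l, c, b)
    have hPS : (P * S) (l₂, c₂, a₂) (l, c, b) = P (l₂, c₂, a₂) (f (l, c, b)) * s (l, c, b) :=
      BCS_mul_form_apply P hSf _ _
    by_cases hblk : ((l₂ : Fin L), (c₂ : Fin 2)) = (l, c)
    · obtain ⟨hl2, hc2⟩ := Prod.mk.inj hblk
      subst hl2; subst hc2
      set b₁ := (f (l₂, c₂, b)).2.2 with hb₁
      set d : Fin r → ℝ := fun a => P'b (l₂, c₂) a b - Pb (l₂, c₂) a b₁ * s (l₂, c₂, b) with hd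
      set C : Matrix (Fin (2 * r)) (Fin r) ℝ := Matrix.of fun i a => A i (l₂, c₂, a) with hC
      have hCd : C *ᵥ d = 0 := by
        funext i
        have h1 : (A * P') i (l₂, c₂, b) = ∑ a, A i (l₂, c₂, a) * P'b (l₂, c₂) a b := by
          rw [hP'_def, BCS_mul_blockDiag_apply]
        have hl : (f (l₂, c₂, b)).1 = l₂ := congrArg Prod.fst hbp
        have hc : (f (l₂, c₂, b)).2.1 = c₂ := congrArg Prod.snd hbp
        have h2 : (A * P) i (f (l₂, c₂, b)) = ∑ a, A i (l₂, c₂, a) * Pb (l₂, c₂) a b₁ := by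
          rw [hP_def, BCS_mul_blockDiag_apply, hb₁]
          rw [hl, hc]
        have h3 := hcol i (l₂, c₂, b)
        show ∑ a, C i a * d a = 0
        calc ∑ a, C i a * d a
            = ∑ a, (A i (l₂, c₂, a) * P'b (l₂, c₂) a b
                - (A i (l₂, c₂, a) * Pb (l₂, c₂) a b₁) * s (l₂, c₂, b)) := by
              refine Finset.sum_congr rfl fun a _ => ?_
              simp only [hd, hC, Matrix.of_apply]
              ring
          _ = (∑ a, A i (l₂, c₂, a) * P'b (l₂, c₂) a b)
                - (∑ a, A i (l₂, c₂, a) * Pb (l₂, c₂) a b₁) * s (l₂, c₂, b) := by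
              rw [Finset.sum_sub_distrib, Finset.sum_mul]
          _ = 0 := by rw [← h1, ← h2, h3]; ring
      have hCtC : Cᵀ * C = 1 := by
        ext a a'
        rw [Matrix.mul_apply]
        simp only [Matrix.transpose_apply, hC, Matrix.of_apply]
        rw [hAcols l₂ c₂ a a', Matrix.one_apply]
      have hd0 : d = 0 := by
        have h4 : Cᵀ *ᵥ (C *ᵥ d) = 0 := by rw [hCd, Matrix.mulVec_zero]
        rw [Matrix.mulVec_mulVec, hCtC, Matrix.one_mulVec] at h4
        exact h4
      have hda₂ := congrFun hd0 a₂
      simp only [hd, Pi.zero_apply] at hda₂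
      rw [hPS]
      show blockDiagonal2L P'b (l₂, c₂, a₂) (l₂, c₂, b)
        = blockDiagonal2L Pb (l₂, c₂, a₂) (f (l₂, c₂, b)) * s (l₂, c₂, b)
      simp only [blockDiagonal2L, Matrix.of_apply]
      rw [if_pos trivial, if_pos hbp.symm]
      linarith [hda₂]
    · rw [hPS]
      have h5 : P' (l₂, c₂, a₂) (l, c, b) = 0 := by
        simp only [hP'_def, blockDiagonal2L, Matrix.of_apply]
        rw [if_neg hblk]
      have h6 : P (l₂, c₂, a₂) (f (l, c, b)) = 0 := by
        simp only [hP_def, blockDiagonal2L, Matrix.of_apply]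
        rw [if_neg (by rw [hbp]; exact hblk)]
      rw [h5, h6, zero_mul]
  rw [hPtilde, hP'PS, Matrix.mul_assoc, hS_def, Matrix.mul_assoc, hQ'TQ',
    Matrix.mul_one]
end

section
/- Let n be even and let A ∈ ℝ^{n×nL} be a union of L orthogonal bases which is not inter-block diagonal. Let P and P̂ both be orthogonal 2L-block diagonal nL×nL matrices with σ(AP) = n+1, and let Q be an nL×nL signed permutation matrix. If A P̂ = A P Q, then P̂ = P Q. -/
open Matrix

section Aux

open Matrix

lemma linIndep_of_spark {α β : Type*} [Fintype α] [Fintype β] (D : Matrix α β ℝ)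
    (k : ℕ) (hk : D.spark = k + 1) (s : Finset β) (hs : s.card ≤ k) :
    LinearIndependent ℝ (fun j : s => fun i => D i j.val) := by
  by_contra h
  have hex : ∃ t : Finset β, ¬ LinearIndependent ℝ (fun j : t => fun i => D i j.val) := ⟨s, h⟩
  rw [Matrix.spark, if_pos hex] at hk
  have hmem : s.card ∈ {m | ∃ t : Finset β, t.card = m ∧
      ¬ LinearIndependent ℝ (fun j : t => fun i => D i j.val)} := ⟨s, rfl, h⟩
  have := Nat.sInf_le hmem
  omega

lemma eq_zero_of_mulVec_supported {α β : Type*} [Fintype α] [Fintype β]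
    (D : Matrix α β ℝ) (s : Finset β)
    (hind : LinearIndependent ℝ (fun j : s => fun i => D i j.val))
    (w : β → ℝ) (hsupp : ∀ j ∉ s, w j = 0) (hw : D.mulVec w = 0) : w = 0 := by
  have hsum : ∑ j : s, (w j.val) • (fun i => D i j.val) = 0 := by
    funext i
    rw [Finset.sum_apply]
    have h1 : ∑ j : s, (w j.val • fun i => D i j.val) i
        = ∑ j ∈ s, D i j * w j := by
      rw [← Finset.sum_attach s (fun j => D i j * w j)]
      simp [mul_comm]
    rw [h1]
    have h2 : ∑ j ∈ s, D i j * w j = ∑ j, D i j * w j := by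
      apply Finset.sum_subset (Finset.subset_univ s)
      intro j _ hj
      rw [hsupp j hj, mul_zero]
    rw [h2]
    have := congrFun hw i
    simpa [Matrix.mulVec, dotProduct] using this
  have hz := Fintype.linearIndependent_iff.mp hind (fun j => w j.val) hsum
  funext j
  by_cases hj : j ∈ s
  · exact hz ⟨j, hj⟩
  · exact hsupp j hj

lemma blockDiagonal2L_eq {r L : ℕ} (Pb : Fin L × Fin 2 → Matrix (Fin r) (Fin r) ℝ) :
    blockDiagonal2L Pb = Matrix.reindex
      ((Equiv.prodComm (Fin r) (Fin L × Fin 2)).trans (Equiv.prodAssoc (Fin L) (Fin 2) (Fin r)))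
      ((Equiv.prodComm (Fin r) (Fin L × Fin 2)).trans (Equiv.prodAssoc (Fin L) (Fin 2) (Fin r)))
      (Matrix.blockDiagonal Pb) := by
  ext ⟨a, b, c⟩ ⟨d, e, f⟩
  simp [blockDiagonal2L, Matrix.blockDiagonal_apply]

lemma blockDiagonal2L_orth {r L : ℕ} (Pb : Fin L × Fin 2 → Matrix (Fin r) (Fin r) ℝ)
    (hP : ∀ b, (Pb b)ᵀ * Pb b = 1) :
    (blockDiagonal2L Pb)ᵀ * blockDiagonal2L Pb = 1 := by
  rw [blockDiagonal2L_eq Pb]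
  rw [Matrix.transpose_reindex]
  rw [Matrix.reindex_apply, Matrix.reindex_apply, Matrix.submatrix_mul_equiv]
  rw [Matrix.blockDiagonal_transpose, ← Matrix.blockDiagonal_mul]
  have : (fun k => (Pb k)ᵀ * Pb k) = fun _ : Fin L × Fin 2 => (1 : Matrix (Fin r) (Fin r) ℝ) := by
    funext k; exact hP k
  rw [this]
  rw [show (fun _ : Fin L × Fin 2 => (1 : Matrix (Fin r) (Fin r) ℝ)) = (1 : (Fin L × Fin 2) → Matrix (Fin r) (Fin r) ℝ) from rfl]
  rw [Matrix.blockDiagonal_one, Matrix.submatrix_one_equiv]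

lemma blockFilter_card {r L : ℕ} (b : Fin L × Fin 2) :
    (Finset.univ.filter (fun p : Fin L × Fin 2 × Fin r => (p.1, p.2.1) = b)).card = r := by
  have himg : (Finset.univ.filter (fun p : Fin L × Fin 2 × Fin r => (p.1, p.2.1) = b))
      = Finset.univ.image (fun x : Fin r => (b.1, b.2, x)) := by
    ext ⟨a, c, d⟩
    simp only [Finset.mem_filter, Finset.mem_univ, true_and, Finset.mem_image]
    constructor
    · rintro h
      obtain ⟨h1, h2⟩ := Prod.mk.injEq .. ▸ (Prod.ext_iff.mp h)
      exact ⟨d, by simp_all⟩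
    · rintro ⟨x, hx⟩
      obtain ⟨h1, h2, h3⟩ : b.1 = a ∧ b.2 = c ∧ x = d := by
        simpa [Prod.ext_iff] using hx
      simp [← h1, ← h2]
  rw [himg, Finset.card_image_of_injective _ (fun x y hxy => by simpa [Prod.ext_iff] using hxy)]
  simp

end Aux

/-- Lemma (key step for structural BCS uniqueness): if `A` is a union of `L`
orthogonal bases which is not inter-block diagonal, `P` and `P̂` are orthogonal
`2L`-block diagonal, `σ(AP) = n + 1` and `A P̂ = A P Q` for a signed permutation
matrix `Q`, then `P̂ = P Q`. -/
theorem blockDiag_signedPerm_unique {r L : ℕ}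
    (Ab : Fin L → Matrix (Fin (2 * r)) (Fin 2 × Fin r) ℝ)
    (hA : ∀ l, (Ab l)ᵀ * Ab l = 1)
    (hnibd : ¬ IsInterBlockDiagonal Ab)
    (Pb Phatb : Fin L × Fin 2 → Matrix (Fin r) (Fin r) ℝ)
    (hP : ∀ b, (Pb b)ᵀ * Pb b = 1) (hPhat : ∀ b, (Phatb b)ᵀ * Phatb b = 1)
    (hspark : (unionOfBases Ab * blockDiagonal2L Pb).spark = 2 * r + 1)
    (Q : Matrix (Fin L × Fin 2 × Fin r) (Fin L × Fin 2 × Fin r) ℝ)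
    (hQ : IsSignedPermMatrix Q)
    (heq : unionOfBases Ab * blockDiagonal2L Phatb
         = unionOfBases Ab * blockDiagonal2L Pb * Q) :
    blockDiagonal2L Phatb = blockDiagonal2L Pb * Q := by
  set D := unionOfBases Ab with hDdef
  set P := blockDiagonal2L Pb with hPdef
  set Phat := blockDiagonal2L Phatb with hPhatdef
  have hPorth : Pᵀ * P = 1 := blockDiagonal2L_orth Pb hP
  have hPPt : P * Pᵀ = 1 := mul_eq_one_comm.mp hPorth
  have hDM : D * (Phat - P * Q) = 0 := by
    rw [Matrix.mul_sub, ← Matrix.mul_assoc, heq, sub_self]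
  rw [← sub_eq_zero]
  ext p q
  -- the q-th column of Phat - P * Q
  set v : Fin L × Fin 2 × Fin r → ℝ := fun p => (Phat - P * Q) p q with hvdef
  suffices hv : v = 0 by
    have := congrFun hv p
    simpa [hvdef] using this
  obtain ⟨k₀, hk₀⟩ := hQ.2.2 q
  -- support of v
  have hvsupp : ∀ k, v k ≠ 0 →
      (k.1, k.2.1) = (q.1, q.2.1) ∨ (k.1, k.2.1) = (k₀.1, k₀.2.1) := by
    intro k hk
    by_contra hcon
    push_neg at hcon
    apply hk
    have h1 : Phat k q = 0 := by
      rw [hPhatdef]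
      simp only [blockDiagonal2L, Matrix.of_apply]
      rw [if_neg hcon.1]
    have h2 : (P * Q) k q = 0 := by
      rw [Matrix.mul_apply]
      apply Finset.sum_eq_zero
      intro m _
      by_cases hm : Q m q = 0
      · rw [hm, mul_zero]
      · have hmk : m = k₀ := hk₀.2 m hm
        have : P k m = 0 := by
          rw [hPdef]
          simp only [blockDiagonal2L, Matrix.of_apply]
          rw [if_neg (by rw [hmk]; exact hcon.2)]
        rw [this, zero_mul]
    simp [hvdef, h1, h2]
  -- w := Pᵀ *ᵥ v
  set w : Fin L × Fin 2 × Fin r → ℝ := Pᵀ.mulVec v with hwdef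
  have hwsupp : ∀ k, w k ≠ 0 →
      (k.1, k.2.1) = (q.1, q.2.1) ∨ (k.1, k.2.1) = (k₀.1, k₀.2.1) := by
    intro k hk
    by_contra hcon
    push_neg at hcon
    apply hk
    rw [hwdef]
    simp only [Matrix.mulVec, dotProduct]
    apply Finset.sum_eq_zero
    intro m _
    by_cases hm : v m = 0
    · rw [hm, mul_zero]
    · have hmblk := hvsupp m hm
      have : Pᵀ k m = 0 := by
        rw [hPdef]
        simp only [Matrix.transpose_apply, blockDiagonal2L, Matrix.of_apply]
        rw [if_neg]
        intro heq'
        rcases hmblk with h | h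
        · exact hcon.1 (heq' ▸ h)
        · exact hcon.2 (heq' ▸ h)
      rw [this, zero_mul]
  -- the support finset
  set s : Finset (Fin L × Fin 2 × Fin r) := Finset.univ.filter
    (fun k => (k.1, k.2.1) = (q.1, q.2.1) ∨ (k.1, k.2.1) = (k₀.1, k₀.2.1)) with hsdef
  have hscard : s.card ≤ 2 * r := by
    rw [hsdef, Finset.filter_or]
    calc _ ≤ (Finset.univ.filter (fun k : Fin L × Fin 2 × Fin r => (k.1, k.2.1) = (q.1, q.2.1))).card
          + (Finset.univ.filter (fun k : Fin L × Fin 2 × Fin r => (k.1, k.2.1) = (k₀.1, k₀.2.1))).card :=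
        Finset.card_union_le _ _
      _ ≤ 2 * r := by rw [blockFilter_card, blockFilter_card]; omega
  -- D *ᵥ v = 0
  have hDv : D.mulVec v = 0 := by
    funext i
    have h0 : (D * (Phat - P * Q)) i q = 0 := by rw [hDM]; rfl
    rw [Matrix.mul_apply] at h0
    simpa [Matrix.mulVec, dotProduct, hvdef] using h0
  -- (D * P) *ᵥ w = 0
  have hDPw : (D * P).mulVec w = 0 := by
    rw [hwdef, Matrix.mulVec_mulVec, Matrix.mul_assoc, hPPt, Matrix.mul_one, hDv]
  -- w = 0 by spark
  have hind := linIndep_of_spark (D * P) (2 * r) hspark s hscard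
  have hw0 : w = 0 := by
    apply eq_zero_of_mulVec_supported (D * P) s hind w _ hDPw
    intro j hj
    by_contra hwj
    apply hj
    rw [hsdef]
    simp only [Finset.mem_filter, Finset.mem_univ, true_and]
    exact hwsupp j hwj
  -- conclude v = 0
  have : P.mulVec w = v := by
    rw [hwdef, Matrix.mulVec_mulVec, hPPt, Matrix.one_mulVec]
  rw [← this, hw0, Matrix.mulVec_zero]
end

section
/- Let A be an n×m real matrix and let P₁ be an m×m real matrix decomposed as P₁ = P_⊥ + P_N, where every column of P_N lies in the null space N(A) of A and every column of P_⊥ lies in the orthogonal complement N(A)^⊥ (with respect to the standard inner product on ℝ^m). Define P₂ = P_⊥ − P_N. Then A P₂ = A P₁ and P₂ᵀ P₂ = P₁ᵀ P₁; in particular, P₂ is invertible if and only if P₁ is invertible. -/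
open Matrix

/-- If `P₁ = P_⊥ + P_N` where the columns of `P_N` lie in the null space of `A` and
the columns of `P_⊥` lie in its orthogonal complement, then `P₂ = P_⊥ − P_N`
satisfies `A P₂ = A P₁` and `P₂ᵀ P₂ = P₁ᵀ P₁`; in particular `P₂` is invertible iff
`P₁` is invertible. -/
theorem flip_nullspace_part {n m : ℕ}
    (A : Matrix (Fin n) (Fin m) ℝ)
    (P₁ Pperp PN : Matrix (Fin m) (Fin m) ℝ)
    (hdecomp : P₁ = Pperp + PN)
    (hN : ∀ j : Fin m, A.mulVec (fun i => PN i j) = 0)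
    (hperp : ∀ j : Fin m, ∀ v : Fin m → ℝ, A.mulVec v = 0 → ∑ i, Pperp i j * v i = 0) :
    A * (Pperp - PN) = A * P₁ ∧
    (Pperp - PN)ᵀ * (Pperp - PN) = P₁ᵀ * P₁ ∧
    (IsUnit (Pperp - PN) ↔ IsUnit P₁) := by
  have hAPN : A * PN = 0 := by
    ext i j
    have := congrFun (hN j) i
    simpa [Matrix.mul_apply, Matrix.mulVec, dotProduct] using this
  have hPP : Pperpᵀ * PN = 0 := by
    ext j k
    have := hperp j (fun i => PN i k) (hN k)
    simpa [Matrix.mul_apply, Matrix.transpose_apply] using this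
  have hPP' : PNᵀ * Pperp = 0 := by
    have := congrArg Matrix.transpose hPP
    simpa [Matrix.transpose_mul] using this
  have h1 : A * (Pperp - PN) = A * P₁ := by
    rw [hdecomp, Matrix.mul_sub, Matrix.mul_add, hAPN]
    abel
  have h2 : (Pperp - PN)ᵀ * (Pperp - PN) = P₁ᵀ * P₁ := by
    rw [hdecomp]
    simp only [Matrix.transpose_sub, Matrix.transpose_add, Matrix.sub_mul, Matrix.add_mul,
      Matrix.mul_sub, Matrix.mul_add, hPP, hPP']
    abel
  refine ⟨h1, h2, ?_⟩
  have hdet : (Pperp - PN).det ^ 2 = P₁.det ^ 2 := by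
    have := congrArg Matrix.det h2
    simpa [Matrix.det_mul, ← Matrix.transpose_sub, Matrix.det_transpose, sq] using this
  simp only [Matrix.isUnit_iff_isUnit_det, isUnit_iff_ne_zero]
  constructor <;> intro h hc <;> [skip; skip] <;>
    · apply h
      have := hdet
      rw [hc] at this
      simpa [pow_eq_zero_iff] using (by nlinarith [this] : _ = (0:ℝ))
end

section
/- Let n be even, m = nL, and let A ∈ ℝ^{n×nL} be a union of L orthogonal bases which is not inter-block diagonal. Let P ∈ ℝ^{m×m} be orthogonal 2L-block diagonal with σ(AP) = n+1. Then the set of m×m permutation matrices Q_D for which there exists an orthogonal 2L-block diagonal matrix P̂ with A P Q_D = A P̂ has exactly ((m/(2L))!)^{2L} elements. -/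
open Matrix

/-- A permutation matrix: a 0–1 matrix with exactly one entry equal to `1` in each
row and each column. -/
def IsPermMatrix {ι : Type*} [Fintype ι] (Q : Matrix ι ι ℝ) : Prop :=
  (∀ i j, Q i j = 0 ∨ Q i j = 1) ∧
  (∀ i, ∃! j, Q i j = 1) ∧ (∀ j, ∃! i, Q i j = 1)

lemma perm_of_isPermMatrix {ι : Type*} [Fintype ι] [DecidableEq ι] {Q : Matrix ι ι ℝ}
    (h : IsPermMatrix Q) : ∃ σ : Equiv.Perm ι, ∀ p q, Q p q = if q = σ p then 1 else 0 := by
  obtain ⟨h01, hrow, hcol⟩ := h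
  choose f hf hf' using hrow
  choose g hg hg' using hcol
  refine ⟨⟨f, g, fun p => (hg' (f p) p (hf p)).symm, fun q => (hf' (g q) q (hg q)).symm⟩, ?_⟩
  intro p q
  by_cases hq : q = f p
  · subst hq
    show Q p (f p) = if f p = f p then 1 else 0
    rw [if_pos rfl]; exact hf p
  · show Q p q = if q = f p then 1 else 0
    rw [if_neg hq]
    rcases h01 p q with h0 | h1
    · exact h0
    · exact absurd (hf' p q h1) hq

lemma mul_bd_apply {r L : ℕ} (Ab : Fin L → Matrix (Fin (2 * r)) (Fin 2 × Fin r) ℝ)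
    (Pb' : Fin L × Fin 2 → Matrix (Fin r) (Fin r) ℝ) (i : Fin (2 * r))
    (l : Fin L) (c : Fin 2) (k : Fin r) :
    (unionOfBases Ab * blockDiagonal2L Pb') i (l, c, k)
      = ∑ j, Ab l i (c, j) * Pb' (l, c) j k := by
  rw [Matrix.mul_apply, Fintype.sum_prod_type, Fintype.sum_eq_single l]
  · rw [Fintype.sum_prod_type, Fintype.sum_eq_single c]
    · exact Finset.sum_congr rfl fun j _ => by simp [unionOfBases, blockDiagonal2L]
    · intro c' hc'
      exact Finset.sum_eq_zero fun j _ => by simp [blockDiagonal2L, Prod.ext_iff, hc']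
  · intro l' hl'
    exact Finset.sum_eq_zero fun p _ => by simp [blockDiagonal2L, Prod.ext_iff, hl']

/-- The permutation matrix associated to a family of within-block permutations. -/
def permBlockMatrix {r L : ℕ} (τ : Fin L × Fin 2 → Equiv.Perm (Fin r)) :
    Matrix (Fin L × Fin 2 × Fin r) (Fin L × Fin 2 × Fin r) ℝ :=
  Matrix.of fun p q => if q = (p.1, p.2.1, τ (p.1, p.2.1) p.2.2) then 1 else 0

lemma permBlockMatrix_isPerm {r L : ℕ} (τ : Fin L × Fin 2 → Equiv.Perm (Fin r)) :
    IsPermMatrix (permBlockMatrix τ) := by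
  refine ⟨fun p q => ?_, fun p => ?_, fun q => ?_⟩
  · by_cases h : q = (p.1, p.2.1, τ (p.1, p.2.1) p.2.2)
    · right; simp [permBlockMatrix, h]
    · left; simp [permBlockMatrix, h]
  · refine ⟨(p.1, p.2.1, τ (p.1, p.2.1) p.2.2), by simp [permBlockMatrix], fun q hq => ?_⟩
    by_contra h
    simp [permBlockMatrix, h] at hq
  · refine ⟨(q.1, q.2.1, (τ (q.1, q.2.1))⁻¹ q.2.2), ?_, fun p hp => ?_⟩
    · simp [permBlockMatrix]
    · by_cases h : q = (p.1, p.2.1, τ (p.1, p.2.1) p.2.2)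
      · subst h; simp
      · simp [permBlockMatrix, h] at hp

lemma permBlockMatrix_injective {r L : ℕ} :
    Function.Injective (permBlockMatrix (r := r) (L := L)) := by
  intro τ τ' h
  funext b
  ext k
  have hbk := congrFun (congrFun h (b.1, b.2, k)) (b.1, b.2, τ (b.1, b.2) k)
  by_contra hne
  have hne' : (b.1, b.2, τ (b.1, b.2) k) ≠ ((b.1, b.2, k).1, (b.1, b.2, k).2.1,
      τ' ((b.1, b.2, k).1, (b.1, b.2, k).2.1) (b.1, b.2, k).2.2) := by
    simp only [ne_eq, Prod.mk.injEq]
    rintro ⟨-, -, h3⟩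
    exact hne (congrArg Fin.val h3)
  rw [show permBlockMatrix τ (b.1, b.2, k) (b.1, b.2, τ (b.1, b.2) k) = 1 by
        simp [permBlockMatrix],
      show permBlockMatrix τ' (b.1, b.2, k) (b.1, b.2, τ (b.1, b.2) k) = 0 by
        simp only [permBlockMatrix, Matrix.of_apply]; rw [if_neg hne']] at hbk
  exact one_ne_zero hbk

/-- If `A ∈ ℝ^{n × nL}` is a union of `L` orthogonal bases which is not inter-block
diagonal and `P` is orthogonal `2L`-block diagonal with `σ(AP) = n + 1`, then the
number of `m × m` permutation matrices `Q_D` (with `m = nL`) for which there exists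
an orthogonal `2L`-block diagonal `P̂` with `A P Q_D = A P̂` is exactly
`((m / (2L))!)^{2L} = (r!)^{2L}`. -/
theorem card_block_preserving_permutations {r L : ℕ}
    (Ab : Fin L → Matrix (Fin (2 * r)) (Fin 2 × Fin r) ℝ)
    (hA : ∀ l, (Ab l)ᵀ * Ab l = 1)
    (hnibd : ¬ IsInterBlockDiagonal Ab)
    (Pb : Fin L × Fin 2 → Matrix (Fin r) (Fin r) ℝ)
    (hP : ∀ b, (Pb b)ᵀ * Pb b = 1)
    (hspark : (unionOfBases Ab * blockDiagonal2L Pb).spark = 2 * r + 1) :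
    {QD : Matrix (Fin L × Fin 2 × Fin r) (Fin L × Fin 2 × Fin r) ℝ |
        IsPermMatrix QD ∧
        ∃ Phatb : Fin L × Fin 2 → Matrix (Fin r) (Fin r) ℝ,
          (∀ b, (Phatb b)ᵀ * Phatb b = 1) ∧
          unionOfBases Ab * blockDiagonal2L Pb * QD
            = unionOfBases Ab * blockDiagonal2L Phatb}.ncard
      = (Nat.factorial r) ^ (2 * L) := by
  classical
  set M := unionOfBases Ab * blockDiagonal2L Pb with hM
  have hPright : ∀ b, Pb b * (Pb b)ᵀ = 1 := fun b => mul_eq_one_comm.mp (hP b)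
  have hPent : ∀ b (x y : Fin r), (∑ j, Pb b j x * Pb b j y) = if x = y then (1:ℝ) else 0 := by
    intro b x y
    have := congrFun (congrFun (hP b) x) y
    simpa [Matrix.mul_apply, Matrix.transpose_apply, Matrix.one_apply] using this
  -- every small set of columns of M is linearly independent
  have hind : ∀ s : Finset (Fin L × Fin 2 × Fin r), s.card ≤ 2 * r →
      LinearIndependent ℝ (fun j : s => fun i => M i j.val) := by
    intro s hs
    by_contra hdep
    unfold Matrix.spark at hspark
    split_ifs at hspark with h
    · have hle : sInf {k | ∃ s : Finset (Fin L × Fin 2 × Fin r), s.card = k ∧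
          ¬ LinearIndependent ℝ (fun j : s => fun i => M i j.val)} ≤ s.card :=
        Nat.sInf_le ⟨s, rfl, hdep⟩
      omega
    · exact h ⟨s, hdep⟩
  -- block columns
  have hcolA : ∀ (b : Fin L × Fin 2) (Pb' : Fin L × Fin 2 → Matrix (Fin r) (Fin r) ℝ),
      (Matrix.of fun i k => (unionOfBases Ab * blockDiagonal2L Pb') i (b.1, b.2, k))
        = (Matrix.of fun i j => Ab b.1 i (b.2, j)) * Pb' b := by
    intro b Pb'
    ext i k
    rw [Matrix.mul_apply]
    exact mul_bd_apply Ab Pb' i b.1 b.2 k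
  -- the set equals the range of permBlockMatrix
  have hrange : {QD : Matrix (Fin L × Fin 2 × Fin r) (Fin L × Fin 2 × Fin r) ℝ |
        IsPermMatrix QD ∧
        ∃ Phatb : Fin L × Fin 2 → Matrix (Fin r) (Fin r) ℝ,
          (∀ b, (Phatb b)ᵀ * Phatb b = 1) ∧
          M * QD = unionOfBases Ab * blockDiagonal2L Phatb}
      = Set.range (permBlockMatrix (r := r) (L := L)) := by
    apply Set.ext
    intro QD
    constructor
    · rintro ⟨hperm, Phatb, hPhat, heq⟩
      obtain ⟨σ, hQσ⟩ := perm_of_isPermMatrix hperm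
      have hMQ : ∀ (i : Fin (2 * r)) (q : Fin L × Fin 2 × Fin r),
          (M * QD) i q = M i (σ.symm q) := by
        intro i q
        rw [Matrix.mul_apply, Fintype.sum_eq_single (σ.symm q)]
        · rw [hQσ]; simp
        · intro p hp
          have hne : q ≠ σ p := fun hqe => hp (by simp [hqe])
          rw [hQσ, if_neg hne, mul_zero]
      -- block columns of the right-hand side in terms of M
      have key : ∀ b : Fin L × Fin 2,
          (Matrix.of fun i k => (unionOfBases Ab * blockDiagonal2L Phatb) i (b.1, b.2, k))
            = (Matrix.of fun i k => M i (b.1, b.2, k)) * ((Pb b)ᵀ * Phatb b) := by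
        intro b
        rw [hcolA b Phatb, hM, hcolA b Pb, Matrix.mul_assoc,
          ← Matrix.mul_assoc (Pb b), hPright b, Matrix.one_mul]
      -- σ.symm preserves blocks
      have hblk : ∀ q : Fin L × Fin 2 × Fin r,
          (σ.symm q).1 = q.1 ∧ (σ.symm q).2.1 = q.2.1 := by
        rintro ⟨l, c, k'⟩
        obtain ⟨⟨l', c', k⟩, hp⟩ : ∃ p, σ.symm (l, c, k') = p := ⟨_, rfl⟩
        rw [hp]
        by_contra hne
        simp only [not_and_or] at hne
        have hne2 : ¬(l' = l ∧ c' = c) := by tauto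
        -- the column (l',c',k) of M is a combination of the block (l,c) columns
        set cf : Fin r → ℝ := fun j => ((Pb (l, c))ᵀ * Phatb (l, c)) j k' with hcf
        have hv : ∀ i, M i (l', c', k) = ∑ j, M i (l, c, j) * cf j := by
          intro i
          have h1 : M i (l', c', k) = (M * QD) i (l, c, k') := by
            rw [hMQ i (l, c, k'), hp]
          have h2 := congrFun (congrFun (key (l, c)) i) k'
          rw [h1, heq] at *
          calc (unionOfBases Ab * blockDiagonal2L Phatb) i (l, c, k')
              = ((Matrix.of fun i k => M i (l, c, k)) * ((Pb (l,c))ᵀ * Phatb (l,c))) i k' := by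
                exact h2
            _ = ∑ j, M i (l, c, j) * cf j := by rw [Matrix.mul_apply]; rfl
        -- build the dependent set
        have hr : 0 < r := k.pos
        have hinjj : Function.Injective (fun j : Fin r => ((l, c, j) : Fin L × Fin 2 × Fin r)) := by
          intro a b' hab
          simpa [Prod.ext_iff] using hab
        set T : Finset (Fin L × Fin 2 × Fin r) :=
          Finset.univ.image (fun j : Fin r => (l, c, j)) with hT
        have hnotmem : ((l', c', k) : Fin L × Fin 2 × Fin r) ∉ T := by
          simp only [hT, Finset.mem_image, Finset.mem_univ, true_and]
          rintro ⟨j, hj⟩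
          simp only [Prod.ext_iff] at hj
          exact hne2 ⟨hj.1.symm, hj.2.1.symm⟩
        set s : Finset (Fin L × Fin 2 × Fin r) := insert (l', c', k) T with hsdef
        have hcards : s.card = r + 1 := by
          rw [hsdef, Finset.card_insert_of_notMem hnotmem, hT,
            Finset.card_image_of_injective _ hinjj, Finset.card_univ, Fintype.card_fin]
        have hli := hind s (by omega)
        set G : (Fin L × Fin 2 × Fin r) → ℝ :=
          fun p => if p = (l', c', k) then 1 else -(cf p.2.2) with hG
        have hsum : (∑ p : s, G p.val • (fun i => M i p.val)) = 0 := by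
          funext i
          simp only [Finset.sum_apply, Pi.smul_apply, smul_eq_mul, Pi.zero_apply]
          rw [Finset.sum_coe_sort s (fun x => G x * M i x), hsdef,
            Finset.sum_insert hnotmem, hT, Finset.sum_image (fun a _ b' _ h => hinjj h)]
          have hG1 : G (l', c', k) = 1 := by rw [hG]; simp
          have hG2 : ∀ j : Fin r, G (l, c, j) = -(cf j) := by
            intro j
            rw [hG]
            have hnej : ((l, c, j) : Fin L × Fin 2 × Fin r) ≠ (l', c', k) := by
              simp only [ne_eq, Prod.mk.injEq]
              rintro ⟨ha, hb, -⟩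
              exact hne2 ⟨ha.symm, hb.symm⟩
            simp [hnej]
          rw [hG1, one_mul]
          simp only [hG2]
          rw [hv i, ← Finset.sum_add_distrib]
          apply Finset.sum_eq_zero
          intro j _
          ring
        have := Fintype.linearIndependent_iff.mp hli (fun p => G p.val) hsum
          ⟨(l', c', k), Finset.mem_insert_self _ _⟩
        rw [hG] at this
        simp at this
      -- extract the within-block permutations
      have hblk' : ∀ p : Fin L × Fin 2 × Fin r, (σ p).1 = p.1 ∧ (σ p).2.1 = p.2.1 := by
        intro p
        have := hblk (σ p)
        rw [Equiv.symm_apply_apply] at this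
        exact ⟨this.1.symm, this.2.symm⟩
      set f : (Fin L × Fin 2) → Fin r → Fin r :=
        fun b k => (σ (b.1, b.2, k)).2.2 with hf
      have hσap : ∀ (b : Fin L × Fin 2) (k : Fin r), σ (b.1, b.2, k) = (b.1, b.2, f b k) := by
        intro b k
        have h1 := hblk' (b.1, b.2, k)
        exact Prod.ext h1.1 (Prod.ext h1.2 rfl)
      have hfinj : ∀ b, Function.Injective (f b) := by
        intro b a a' ha
        have : σ (b.1, b.2, a) = σ (b.1, b.2, a') := by
          rw [hσap, hσap, ha]
        have := σ.injective this
        simpa [Prod.ext_iff] using this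
      refine ⟨fun b => Equiv.ofBijective (f b) (Finite.injective_iff_bijective.mp (hfinj b)), ?_⟩
      ext p q
      rw [permBlockMatrix, Matrix.of_apply, hQσ p q]
      have : σ p = (p.1, p.2.1, f (p.1, p.2.1) p.2.2) := hσap (p.1, p.2.1) p.2.2
      rw [this]
      rfl
    · rintro ⟨τ, rfl⟩
      refine ⟨permBlockMatrix_isPerm τ, fun b => Matrix.of fun j k => Pb b j ((τ b)⁻¹ k),
        ?_, ?_⟩
      · intro b
        ext x y
        rw [Matrix.mul_apply, Matrix.one_apply]
        simp only [Matrix.transpose_apply, Matrix.of_apply]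
        rw [hPent b ((τ b)⁻¹ x) ((τ b)⁻¹ y)]
        simp
      · ext i q
        obtain ⟨l, c, k⟩ := q
        rw [Matrix.mul_apply, mul_bd_apply,
          Fintype.sum_eq_single ((l, c, (τ (l, c))⁻¹ k) : Fin L × Fin 2 × Fin r)]
        · have hcond : ((l, c, k) : Fin L × Fin 2 × Fin r)
              = (l, c, τ (l, c) ((τ (l, c))⁻¹ k)) := by simp
          rw [show permBlockMatrix τ (l, c, (τ (l, c))⁻¹ k) (l, c, k) = 1 by
            simp [permBlockMatrix]]
          rw [mul_one, hM, mul_bd_apply]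
          simp
        · intro p hp
          have hne : ((l, c, k) : Fin L × Fin 2 × Fin r)
              ≠ (p.1, p.2.1, τ (p.1, p.2.1) p.2.2) := by
            rintro h
            obtain ⟨h1, h2, h3⟩ : l = p.1 ∧ c = p.2.1 ∧ k = τ (p.1, p.2.1) p.2.2 := by
              simpa [Prod.ext_iff] using h
            apply hp
            have h4 : p.2.2 = (τ (l, c))⁻¹ k := by
              rw [h3, h1, h2]; simp
            exact Prod.ext h1.symm (Prod.ext h2.symm h4)
          rw [show permBlockMatrix τ p (l, c, k) = 0 by
            simp only [permBlockMatrix, Matrix.of_apply]; rw [if_neg hne], mul_zero]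
  rw [hrange, ← Set.image_univ, Set.ncard_image_of_injective _ permBlockMatrix_injective,
    Set.ncard_univ, Nat.card_eq_fintype_card, Fintype.card_fun]
  simp [Fintype.card_perm, mul_comm]
end

section
/- Let Σ be an n×n real diagonal matrix with nonnegative diagonal entries and let Z be an n×n real orthogonal matrix. Then Tr(ΣZ) ≤ Tr(Σ). Moreover, if all diagonal entries of Σ are strictly positive, then Tr(ΣZ) = Tr(Σ) if and only if Z is the identity matrix. (This is the key step showing that in the basis update step of the OBD-BCS algorithm, when R = S Bᵀ A has full rank with singular value decomposition R = U Σ Vᵀ, the matrix P = V Uᵀ is the unique orthogonal maximizer of Tr[Bᵀ A P S].) -/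
open Matrix

/-- For a diagonal matrix `Σ` with nonnegative diagonal entries and an orthogonal
matrix `Z`, `Tr(ΣZ) ≤ Tr(Σ)`; and when all diagonal entries are strictly positive,
equality holds iff `Z` is the identity. -/
theorem trace_diag_mul_orthogonal_le {n : ℕ}
    (S Z : Matrix (Fin n) (Fin n) ℝ)
    (hdiag : ∀ i j : Fin n, i ≠ j → S i j = 0)
    (hnonneg : ∀ i, 0 ≤ S i i)
    (hZ : Zᵀ * Z = 1) :
    (S * Z).trace ≤ S.trace ∧
    ((∀ i, 0 < S i i) → ((S * Z).trace = S.trace ↔ Z = 1)) := by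
  -- columns of Z are unit vectors
  have hcol : ∀ j : Fin n, ∑ k, Z k j * Z k j = 1 := by
    intro j
    have := congrFun (congrFun hZ j) j
    simpa [Matrix.mul_apply, Matrix.transpose_apply, Matrix.one_apply] using this
  have hdle : ∀ j : Fin n, Z j j ≤ 1 := by
    intro j
    have h1 := hcol j
    have hle : Z j j * Z j j ≤ 1 := by
      rw [← h1]
      exact Finset.single_le_sum (f := fun k => Z k j * Z k j)
        (fun k _ => mul_self_nonneg _) (Finset.mem_univ j)
    nlinarith
  -- trace of S * Z
  have htr : (S * Z).trace = ∑ i, S i i * Z i i := by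
    unfold Matrix.trace
    apply Finset.sum_congr rfl
    intro i _
    simp only [Matrix.diag_apply, Matrix.mul_apply]
    exact Finset.sum_eq_single i (fun k _ hk => by rw [hdiag i k (Ne.symm hk), zero_mul])
      (fun h => absurd (Finset.mem_univ i) h)
  have htrS : S.trace = ∑ i, S i i := rfl
  have hterm : ∀ i : Fin n, i ∈ Finset.univ → S i i * Z i i ≤ S i i := by
    intro i _
    calc S i i * Z i i ≤ S i i * 1 := mul_le_mul_of_nonneg_left (hdle i) (hnonneg i)
      _ = S i i := mul_one _
  refine ⟨by rw [htr, htrS]; exact Finset.sum_le_sum hterm, ?_⟩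
  intro hpos
  constructor
  · intro heq
    rw [htr, htrS] at heq
    have hall := (Finset.sum_eq_sum_iff_of_le hterm).mp heq
    have hdd : ∀ j, Z j j = 1 := by
      intro j
      have := hall j (Finset.mem_univ j)
      have hp := hpos j
      nlinarith
    ext i j
    rcases eq_or_ne i j with rfl | hij
    · simp [hdd i, Matrix.one_apply]
    · have h1 := hcol j
      rw [← Finset.add_sum_erase _ (fun k => Z k j * Z k j) (Finset.mem_univ j)] at h1
      have hsplit := h1
      rw [hdd j, one_mul] at hsplit
      have hsum0 : ∑ k ∈ Finset.univ.erase j, Z k j * Z k j = 0 := by linarith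
      have hz : Z i j * Z i j = 0 := by
        have := (Finset.sum_eq_zero_iff_of_nonneg
          (fun k _ => mul_self_nonneg (Z k j))).mp hsum0 i
          (Finset.mem_erase.mpr ⟨hij, Finset.mem_univ i⟩)
        exact this
      have : Z i j = 0 := by nlinarith
      simp [this, Matrix.one_apply, hij]
  · rintro rfl
    simp
end
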